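/- For languages L_0, ..., L_{k-1} over alphabet Σ = {a_0, ..., a_{ℓ-1}}, the intersection ⋂_{i∈[k]} L_i equals the language obtained by taking the interleaving ⧢_{i∈[k]} L_i, intersecting it with (a_0^k + ... + a_{ℓ-1}^k)^*, and then applying the (0 mod k)-restriction. -/

import Mathlib

/-- The `(i mod k)`-restriction of a word: the letters at positions congruent to
`i` modulo `k` (positions numbered from `0`). -/
def restrict {α : Type*} (k i : ℕ) (w : List α) : List α :=
  (((List.range w.length).zip w).filter fun p => p.1 % k = i).map Prod.snd

/-- The interleaving of `k` languages: words of length divisible by `k` whose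
`(i mod k)`-restriction belongs to `L i` for every `i ∈ [k]`. -/
def interleaving {α : Type*} (k : ℕ) (L : Fin k → Set (List α)) : Set (List α) :=
  {w | w.length % k = 0 ∧ ∀ i : Fin k, restrict k i w ∈ L i}

/-- Kleene star of a set of words. -/
def star {α : Type*} (S : Set (List α)) : Set (List α) :=
  {w | ∃ l : List (List α), (∀ u ∈ l, u ∈ S) ∧ l.flatten = w}

/-- `(a_0^k + ⋯ + a_{ℓ-1}^k)^*`: the Kleene star of the language of all single
letters repeated `k` times. -/
def blocks (α : Type*) (k : ℕ) : Set (List α) :=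
  star {w | ∃ a : α, w = List.replicate k a}

namespace List

/-- Local replacement for the removed `List.enumFrom`. -/
def enumFrom {α : Type*} : ℕ → List α → List (ℕ × α)
  | _, [] => []
  | n, x :: xs => (n, x) :: enumFrom (n + 1) xs

/-- Local replacement for the removed `List.enum`. -/
def enum {α : Type*} (l : List α) : List (ℕ × α) := enumFrom 0 l

@[simp] theorem enumFrom_nil {α : Type*} (n : ℕ) : enumFrom n ([] : List α) = [] := rfl

theorem enumFrom_cons {α : Type*} (n : ℕ) (a : α) (l : List α) :
    enumFrom n (a :: l) = (n, a) :: enumFrom (n + 1) l := rfl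

theorem enumFrom_append {α : Type*} : ∀ (n : ℕ) (xs ys : List α),
    enumFrom n (xs ++ ys) = enumFrom n xs ++ enumFrom (n + xs.length) ys
  | _, [], _ => by simp
  | n, a :: xs, ys => by
    rw [cons_append, enumFrom_cons, enumFrom_cons, enumFrom_append (n + 1) xs ys, length_cons,
      cons_append, Nat.add_assoc, Nat.add_comm 1]

theorem enum_append {α : Type*} (xs ys : List α) :
    enum (xs ++ ys) = enum xs ++ enumFrom xs.length ys := by
  unfold enum; rw [enumFrom_append, Nat.zero_add]

theorem zip_range'_eq_enumFrom {α : Type*} : ∀ (n : ℕ) (l : List α),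
    (range' n l.length).zip l = enumFrom n l
  | _, [] => rfl
  | n, a :: l => by
    rw [length_cons, range'_succ, zip_cons_cons, zip_range'_eq_enumFrom (n + 1) l]; rfl

theorem zip_range_eq_enum {α : Type*} (l : List α) : (range l.length).zip l = enum l := by
  rw [range_eq_range']; exact zip_range'_eq_enumFrom 0 l

end List

/-- Filtering `enumFrom` by residue only depends on the residue of the start. -/
lemma filter_enumFrom_shift {α : Type*} (k i : ℕ) (l : List α) :
    ∀ n m : ℕ, n % k = m % k →
      ((List.enumFrom n l).filter (fun p => p.1 % k = i)).map Prod.snd =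
      ((List.enumFrom m l).filter (fun p => p.1 % k = i)).map Prod.snd := by
  induction l with
  | nil => intro n m _; simp
  | cons a t ih =>
    intro n m h
    have h' : (n + 1) % k = (m + 1) % k := by rw [Nat.add_mod n 1 k, Nat.add_mod m 1 k, h]
    rw [List.enumFrom_cons, List.enumFrom_cons]
    simp only [List.filter_cons, decide_eq_true_eq]
    by_cases hc : n % k = i
    · have hc' : m % k = i := h ▸ hc
      rw [if_pos hc, if_pos hc', List.map_cons, List.map_cons, ih _ _ h']
    · have hc' : ¬ m % k = i := fun hh => hc (h ▸ hh)
      rw [if_neg hc, if_neg hc']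
      exact ih _ _ h'

lemma restrict_append {α : Type*} (k i : ℕ) (u t : List α) (h : u.length = k) :
    restrict k i (u ++ t) = restrict k i u ++ restrict k i t := by
  unfold restrict
  rw [List.zip_range_eq_enum, List.zip_range_eq_enum, List.zip_range_eq_enum]
  rw [List.enum_append, List.filter_append, List.map_append, h]
  congr 1
  have := filter_enumFrom_shift k i t k 0 (by simp [Nat.mod_self])
  rw [this]
  rfl

lemma enumFrom_replicate {α : Type*} (a : α) :
    ∀ (n s : ℕ), List.enumFrom s (List.replicate n a) =
      (List.range' s n).map (fun j => (j, a)) := by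
  intro n
  induction n with
  | zero => intro s; simp
  | succ n ih =>
    intro s
    rw [List.replicate_succ, List.enumFrom_cons, List.range'_succ, List.map_cons, ih]

lemma filter_range'_mod (k i : ℕ) (hi : i < k) :
    (List.range' 0 k).filter (fun j => decide (j % k = i)) = [i] := by
  have hcong : (List.range' 0 k).filter (fun j => decide (j % k = i)) =
      (List.range' 0 k).filter (fun j => decide (j = i)) := by
    apply List.filter_congr
    intro x hx
    rw [List.mem_range'] at hx
    have : x < k := by omega
    simp [Nat.mod_eq_of_lt this]
  rw [hcong]
  clear hcong
  have : ∀ m, i < m → m ≤ k → (List.range' 0 m).filter (fun j => decide (j = i)) = [i] := by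
    intro m
    induction m with
    | zero => omega
    | succ m ihm =>
      intro h1 h2
      have hsplit : List.range' 0 (m+1) = List.range' 0 m ++ [0+m] := List.range'_1_concat (s := 0) (n := m)
      rw [Nat.zero_add] at hsplit
      rw [hsplit, List.filter_append]
      by_cases hm : i = m
      · subst hm
        have : (List.range' 0 i).filter (fun j => decide (j = i)) = [] := by
          apply List.filter_eq_nil_iff.mpr
          intro x hx
          rw [List.mem_range'] at hx
          simp; omega
        simp [this]
      · have h1' : i < m := by omega
        rw [ihm h1' (by omega)]
        simp [Ne.symm hm]
  exact this k hi le_rfl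

lemma restrict_replicate {α : Type*} (k i : ℕ) (hi : i < k) (a : α) :
    restrict k i (List.replicate k a) = [a] := by
  unfold restrict
  rw [List.zip_range_eq_enum]
  rw [show (List.replicate k a).enum = List.enumFrom 0 (List.replicate k a) from rfl,
    enumFrom_replicate, List.filter_map, List.map_map]
  have : ((fun p : ℕ × α => decide (p.1 % k = i)) ∘ fun j => (j, a)) =
      fun j => decide (j % k = i) := rfl
  rw [this, filter_range'_mod k i hi]
  rfl

lemma restrict_block_cons {α : Type*} (k i : ℕ) (hi : i < k) (a : α) (t : List α) :
    restrict k i (List.replicate k a ++ t) = a :: restrict k i t := by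
  rw [restrict_append k i _ t (List.length_replicate (n := k) (a := a)), restrict_replicate k i hi a]
  rfl

/-- On a join of `k`-blocks, all restrictions agree. -/
lemma restrict_join_eq {α : Type*} (k : ℕ) (i : ℕ) (hi : i < k)
    (l : List (List α)) (hl : ∀ u ∈ l, ∃ a : α, u = List.replicate k a) :
    restrict k i l.flatten = restrict k 0 l.flatten := by
  induction l with
  | nil => rfl
  | cons u t ih =>
    obtain ⟨a, rfl⟩ := hl u (by simp)
    rw [List.flatten_cons, restrict_block_cons k i hi, restrict_block_cons k 0 (by omega)]
    rw [ih (fun v hv => hl v (by simp [hv]))]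

lemma restrict_expand {α : Type*} (k i : ℕ) (hi : i < k) (w : List α) :
    restrict k i ((w.map (fun a => List.replicate k a)).flatten) = w := by
  induction w with
  | nil => rfl
  | cons a t ih =>
    rw [List.map_cons, List.flatten_cons, restrict_block_cons k i hi, ih]

lemma length_join_blocks {α : Type*} (k : ℕ) (l : List (List α))
    (hl : ∀ u ∈ l, ∃ a : α, u = List.replicate k a) :
    l.flatten.length % k = 0 := by
  induction l with
  | nil => simp
  | cons u t ih =>
    obtain ⟨a, rfl⟩ := hl u (by simp)
    rw [List.flatten_cons, List.length_append, List.length_replicate, Nat.add_mod_left]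
    exact ih (fun v hv => hl v (by simp [hv]))

/-- Observation 1: the intersection of `k` languages equals the image, under the
`(0 mod k)`-restriction, of the interleaving of the languages intersected with
`(a_0^k + ⋯ + a_{ℓ-1}^k)^*`. -/
theorem intersection_eq_restrict_interleaving {α : Type*} (k : ℕ) (hk : 2 ≤ k)
    (L : Fin k → Set (List α)) :
    (⋂ i : Fin k, L i) =
      (restrict k 0) '' (interleaving k L ∩ blocks α k) := by
  ext w
  simp only [Set.mem_iInter, Set.mem_image, Set.mem_inter_iff]
  constructor
  · intro hw
    refine ⟨(w.map (fun a => List.replicate k a)).flatten, ⟨⟨?_, ?_⟩, ?_⟩, ?_⟩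
    · exact length_join_blocks k _ (by intro u hu; simp at hu; obtain ⟨a, _, rfl⟩ := hu; exact ⟨a, rfl⟩)
    · intro i
      rw [restrict_expand k i i.isLt w]
      exact hw i
    · exact ⟨w.map (fun a => List.replicate k a), by intro u hu; simp at hu; obtain ⟨a, _, rfl⟩ := hu; exact ⟨a, rfl⟩, rfl⟩
    · exact restrict_expand k 0 (by omega) w
  · rintro ⟨v, ⟨⟨_, hres⟩, ⟨l, hl, rfl⟩⟩, rfl⟩
    intro i
    have := restrict_join_eq k i i.isLt l hl
    rw [← this]
    exact hres i
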